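/- Let S be a finite set, d a positive integer, f : S → ℝ a function with f(x) ≥ 0 for all x ∈ S, and let ψ : S → ℝ^d be a random map such that the d·|S| coordinates {ψ(s)_i : s ∈ S, 1 ≤ i ≤ d} are independent and each is uniformly distributed on {−1/√d, +1/√d}. For arbitrary subsets A, B ⊆ S, define the random vectors a = Σ_{x ∈ A} ψ(x)·√(f(x)) and b = Σ_{y ∈ B} ψ(y)·√(f(y)). Then E[a · b] = Σ_{x ∈ A ∩ B} f(x). -/

import Mathlib

open MeasureTheory ProbabilityTheory

/-- For a nonnegative weight function `f`, the expected dot product of the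
`√f`-weighted DotHash sketches equals `∑_{x ∈ A ∩ B} f(x)`. -/
theorem dothash_expected_dot_eq_weighted_inter
    {Ω : Type*} [MeasurableSpace Ω] (μ : Measure Ω) [IsProbabilityMeasure μ]
    {S : Type*} [Fintype S] [DecidableEq S]
    (d : ℕ) (hd : 0 < d)
    (f : S → ℝ) (hf : ∀ x : S, 0 ≤ f x)
    (ψ : Ω → S → Fin d → ℝ)
    (hmeas : ∀ (s : S) (i : Fin d), Measurable fun ω => ψ ω s i)
    (hindep : iIndepFun
      (fun (p : S × Fin d) ω => ψ ω p.1 p.2) μ)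
    (hunif : ∀ (s : S) (i : Fin d),
      μ {ω | ψ ω s i = 1 / Real.sqrt d} = 1/2 ∧
      μ {ω | ψ ω s i = -(1 / Real.sqrt d)} = 1/2)
    (A B : Finset S) :
    ∫ ω, ∑ i, (∑ x ∈ A, ψ ω x i * Real.sqrt (f x))
        * (∑ y ∈ B, ψ ω y i * Real.sqrt (f y)) ∂μ
      = ∑ x ∈ A ∩ B, f x := by
  set a : ℝ := 1 / Real.sqrt d with ha_def
  have hdR : (0:ℝ) < d := by exact_mod_cast hd
  have hsqrt : 0 < Real.sqrt d := Real.sqrt_pos.mpr hdR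
  have ha : 0 < a := by positivity
  have hane : a ≠ -a := by nlinarith
  -- a.e. each coordinate is ±a
  have hae : ∀ (s : S) (i : Fin d), ∀ᵐ ω ∂μ, ψ ω s i = a ∨ ψ ω s i = -a := by
    intro s i
    set Ep : Set Ω := {ω | ψ ω s i = a} with hEp_def
    set Em : Set Ω := {ω | ψ ω s i = -a} with hEm_def
    have hEp : MeasurableSet Ep := (hmeas s i) (measurableSet_singleton a)
    have hEm : MeasurableSet Em := (hmeas s i) (measurableSet_singleton (-a))
    have hdisj : Disjoint Ep Em := by
      rw [Set.disjoint_left]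
      intro ω h1 h2
      exact hane (h1.symm.trans h2)
    have hunion : μ (Ep ∪ Em) = 1 := by
      rw [measure_union hdisj hEm, (hunif s i).1, (hunif s i).2]
      exact ENNReal.add_halves 1
    have hcompl : μ (Ep ∪ Em)ᶜ = 0 := by
      rw [measure_compl (hEp.union hEm) (measure_ne_top _ _), hunion, measure_univ,
        tsub_self]
    filter_upwards [measure_eq_zero_iff_ae_notMem.mp hcompl] with ω hω
    simpa [Ep, Em, Set.mem_union, Set.mem_setOf_eq] using not_not.mp hω
  -- each coordinate has mean 0
  have hzero : ∀ (s : S) (i : Fin d), ∫ ω, ψ ω s i ∂μ = 0 := by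
    intro s i
    set Ep : Set Ω := {ω | ψ ω s i = a} with hEp_def
    have hEp : MeasurableSet Ep := (hmeas s i) (measurableSet_singleton a)
    have hcongr : (fun ω => ψ ω s i)
        =ᵐ[μ] fun ω => Ep.indicator (fun _ => 2 * a) ω + (-a) := by
      filter_upwards [hae s i] with ω hω
      rcases hω with h | h
      · have : ω ∈ Ep := h
        simp [Set.indicator_of_mem this, h]
        ring
      · have : ω ∉ Ep := by
          intro hmem
          exact hane ((Set.mem_setOf_eq ▸ hmem).symm.trans h)
        simp [Set.indicator_of_notMem this, h]
    rw [integral_congr_ae hcongr, integral_add ((integrable_const (2*a)).indicator hEp)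
      (integrable_const _), integral_indicator_const _ hEp, integral_const]
    have : μ Ep = 1/2 := (hunif s i).1
    rw [measureReal_def, measureReal_def, this]
    simp only [smul_eq_mul, measure_univ, ENNReal.toReal_one, one_smul]
    rw [ENNReal.toReal_div]
    simp
  -- squared coordinate has mean 1/d
  have hsq : ∀ (s : S) (i : Fin d), ∫ ω, ψ ω s i * ψ ω s i ∂μ = 1 / d := by
    intro s i
    have hcongr : (fun ω => ψ ω s i * ψ ω s i) =ᵐ[μ] fun _ => (1:ℝ)/d := by
      filter_upwards [hae s i] with ω hω
      have haa : a * a = 1 / d := by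
        rw [ha_def]
        rw [div_mul_div_comm, one_mul, Real.mul_self_sqrt hdR.le]
      rcases hω with h | h <;> rw [h] <;> nlinarith
    rw [integral_congr_ae hcongr, integral_const]
    simp
  -- covariance structure
  have hcov : ∀ (x y : S) (i : Fin d),
      ∫ ω, ψ ω x i * ψ ω y i ∂μ = if x = y then 1 / (d:ℝ) else 0 := by
    intro x y i
    by_cases hxy : x = y
    · simp [hxy, hsq y i]
    · have hne : (x, i) ≠ (y, i) := by simp [hxy]
      have hind : IndepFun (fun ω => ψ ω x i) (fun ω => ψ ω y i) μ :=
        hindep.indepFun hne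
      rw [if_neg hxy,
        show (fun ω => ψ ω x i * ψ ω y i)
          = (fun ω => ψ ω x i) * (fun ω => ψ ω y i) from rfl, hind.integral_mul_eq_mul_integral (hmeas x i).aestronglyMeasurable
        (hmeas y i).aestronglyMeasurable, hzero x i, zero_mul]
  -- integrability of each product term
  have hint : ∀ (x y : S) (i : Fin d),
      Integrable (fun ω => ψ ω x i * Real.sqrt (f x) * (ψ ω y i * Real.sqrt (f y))) μ := by
    intro x y i
    refine Integrable.mono' (integrable_const (a * Real.sqrt (f x) * (a * Real.sqrt (f y))))
      (((hmeas x i).mul_const _).mul ((hmeas y i).mul_const _)).aestronglyMeasurable ?_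
    filter_upwards [hae x i, hae y i] with ω h1 h2
    have hb1 : |ψ ω x i| = a := by rcases h1 with h | h <;> simp [h, abs_of_pos ha]
    have hb2 : |ψ ω y i| = a := by rcases h2 with h | h <;> simp [h, abs_of_pos ha]
    rw [Real.norm_eq_abs, abs_mul, abs_mul, abs_mul, hb1, hb2,
      abs_of_nonneg (Real.sqrt_nonneg _), abs_of_nonneg (Real.sqrt_nonneg _)]
  -- main computation
  have hexp : (fun ω => ∑ i, (∑ x ∈ A, ψ ω x i * Real.sqrt (f x))
      * (∑ y ∈ B, ψ ω y i * Real.sqrt (f y)))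
      = fun ω => ∑ i, ∑ x ∈ A, ∑ y ∈ B,
        ψ ω x i * Real.sqrt (f x) * (ψ ω y i * Real.sqrt (f y)) := by
    funext ω
    exact Finset.sum_congr rfl fun i _ => Finset.sum_mul_sum _ _ _ _
  rw [hexp]
  rw [integral_finset_sum _ fun i _ => integrable_finset_sum _ fun x _ =>
    integrable_finset_sum _ fun y _ => hint x y i]
  have hterm : ∀ i : Fin d,
      ∫ ω, ∑ x ∈ A, ∑ y ∈ B, ψ ω x i * Real.sqrt (f x) * (ψ ω y i * Real.sqrt (f y)) ∂μ
        = (∑ x ∈ A ∩ B, f x) / d := by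
    intro i
    rw [integral_finset_sum _ fun x _ => integrable_finset_sum _ fun y _ => hint x y i]
    have : ∀ x ∈ A, ∫ ω, ∑ y ∈ B, ψ ω x i * Real.sqrt (f x) * (ψ ω y i * Real.sqrt (f y)) ∂μ
        = ∑ y ∈ B, Real.sqrt (f x) * Real.sqrt (f y) * (if x = y then 1 / (d:ℝ) else 0) := by
      intro x _
      rw [integral_finset_sum _ fun y _ => hint x y i]
      refine Finset.sum_congr rfl fun y _ => ?_
      rw [← hcov x y i, ← integral_const_mul]
      congr 1; funext ω; ring
    rw [Finset.sum_congr rfl this]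
    have hswap : ∀ x : S, ∑ y ∈ B, Real.sqrt (f x) * Real.sqrt (f y) *
        (if x = y then 1 / (d:ℝ) else 0)
        = if x ∈ B then f x / d else 0 := by
      intro x
      simp only [mul_ite, mul_zero]
      rw [Finset.sum_ite_eq B x (fun y => Real.sqrt (f x) * Real.sqrt (f y) * (1 / (d:ℝ)))]
      by_cases hx : x ∈ B
      · rw [if_pos hx, if_pos hx, Real.mul_self_sqrt (hf x)]; ring
      · rw [if_neg hx, if_neg hx]
    rw [Finset.sum_congr rfl fun x _ => hswap x, ← Finset.sum_filter,
      Finset.filter_mem_eq_inter, ← Finset.sum_div]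
  rw [Finset.sum_congr rfl fun i _ => hterm i, Finset.sum_const, Finset.card_univ,
    Fintype.card_fin, nsmul_eq_mul]
  field_simp
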